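/- Let Φ be an automorphism of a category C, and suppose that for some class E of objects of C, the object Φ(A) is isomorphic to A for every A in E. Then Φ is a composition Φ = Ψ ∘ Γ of two automorphisms of C, where Γ fixes all objects in E and Ψ is an inner automorphism of C. -/

import Mathlib

open CategoryTheory

namespace Stmt1Aux

variable {C : Type*} [Category C]

/-- Conjugation functor: given a function on objects and isos `X ≅ t X`, transport morphisms. -/
def conjF (t : C → C) (f : ∀ X : C, X ≅ t X) : C ⥤ C where
  obj := t
  map {X Y} μ := (f X).inv ≫ μ ≫ (f Y).hom
  map_id X := by simp
  map_comp := by intros; simp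

lemma conjF_comp (t u : C → C) (f : ∀ X : C, X ≅ t X) (g : ∀ X : C, X ≅ u X) :
    conjF t f ⋙ conjF u g = conjF (fun X => u (t X)) (fun X => f X ≪≫ g (t X)) := by
  refine CategoryTheory.Functor.ext (fun X => rfl) ?_
  intros
  simp [conjF]
  erw [eqToHom_refl, Category.id_comp]

lemma conjF_eq_id (t : C → C) (ht : ∀ X, t X = X) (f : ∀ X : C, X ≅ t X)
    (hf : ∀ X, (f X).hom = eqToHom (ht X).symm) : conjF t f = 𝟭 C := by
  refine CategoryTheory.Functor.ext (fun X => ht X) ?_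
  intro X Y μ
  have hX : (f X).inv = eqToHom (ht X) := by
    rw [Iso.inv_ext (g := eqToHom (ht X))]
    rw [hf]; simp
  simp [conjF, hX, hf]

end Stmt1Aux

open Stmt1Aux

/-- Let `Φ` be an automorphism of a category `C` (a functor with a strict
two-sided inverse), and suppose that for some class `E` of objects of `C`, `Φ.obj A` is
isomorphic to `A` for every `A ∈ E`. Then `Φ = Ψ ∘ Γ` where `Γ` and `Ψ` are automorphisms
of `C`, `Γ` fixes all objects of `E`, and `Ψ` is inner (isomorphic to the identity). -/
theorem stmt1 {C : Type*} [Category C] (Φ Φinv : C ⥤ C)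
    (hΦ1 : Φ ⋙ Φinv = 𝟭 C) (hΦ2 : Φinv ⋙ Φ = 𝟭 C)
    (E : Set C) (hE : ∀ A ∈ E, Nonempty (Φ.obj A ≅ A)) :
    ∃ (Γ Γinv Ψ Ψinv : C ⥤ C),
      Γ ⋙ Γinv = 𝟭 C ∧ Γinv ⋙ Γ = 𝟭 C ∧
      Ψ ⋙ Ψinv = 𝟭 C ∧ Ψinv ⋙ Ψ = 𝟭 C ∧
      Nonempty (𝟭 C ≅ Ψ) ∧ (∀ A ∈ E, Γ.obj A = A) ∧ Γ ⋙ Ψ = Φ := by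
  classical
  have hobj1 : ∀ X : C, Φinv.obj (Φ.obj X) = X := fun X => Functor.congr_obj hΦ1 X
  have hobj2 : ∀ X : C, Φ.obj (Φinv.obj X) = X := fun X => Functor.congr_obj hΦ2 X
  let e : Equiv.Perm C := ⟨Φ.obj, Φinv.obj, hobj1, hobj2⟩
  have he : ∀ X : C, e X = Φ.obj X := fun _ => rfl
  have hesymm : ∀ X : C, e.symm X = Φinv.obj X := fun _ => rfl
  -- transferring isomorphisms along Φ / Φinv
  have transfer : ∀ U V : C, Nonempty (Φ.obj U ≅ Φ.obj V) → Nonempty (U ≅ V) := by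
    rintro U V ⟨i⟩
    exact ⟨eqToIso (hobj1 U).symm ≪≫ Φinv.mapIso i ≪≫ eqToIso (hobj1 V)⟩
  -- the orbit saturation of E
  let O : Set C := {X | ∃ k : ℤ, (e ^ k) X ∈ E}
  have key : ∀ k : ℤ, ∀ X : C, (e ^ k) X ∈ E → Nonempty (Φ.obj X ≅ X) := by
    intro k
    induction k using Int.induction_on with
    | zero => intro X hX; exact hE X (by simpa using hX)
    | succ n ih =>
        intro X hX
        have h1 : (e ^ (n : ℤ)) (e X) ∈ E := by
          have : ((e ^ (n : ℤ)) * e) X ∈ E := by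
            rw [← zpow_add_one]; exact hX
          simpa using this
        have h2 := ih (e X) h1
        rw [he] at h2
        exact transfer (Φ.obj X) X h2
    | pred n ih =>
        intro X hX
        have h1 : (e ^ (-(n : ℤ))) (e.symm X) ∈ E := by
          have : ((e ^ (-(n : ℤ))) * e⁻¹) X ∈ E := by
            rw [← zpow_sub_one]; exact hX
          simpa using this
        obtain ⟨i⟩ := ih (e.symm X) h1
        rw [hesymm] at i
        exact ⟨Φ.mapIso (eqToIso (hobj2 X).symm ≪≫ i) ≪≫ eqToIso (hobj2 X)⟩
  have hOe : ∀ X : C, X ∈ O ↔ e X ∈ O := by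
    intro X
    constructor
    · rintro ⟨k, hk⟩
      refine ⟨k - 1, ?_⟩
      have : ((e ^ (k - 1)) * e) X ∈ E := by
        rw [zpow_sub_one]; simpa using hk
      simpa using this
    · rintro ⟨k, hk⟩
      refine ⟨k + 1, ?_⟩
      have : ((e ^ k) * e) X ∈ E := by simpa using hk
      rw [← zpow_add_one] at this; exact this
  have hOesymm : ∀ X : C, X ∈ O ↔ e.symm X ∈ O := by
    intro X
    have := hOe (e.symm X)
    simp only [Equiv.apply_symm_apply] at this
    exact this.symm
  -- the corrected object bijection
  let s : C → C := fun X => if X ∈ O then e X else X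
  let sinv : C → C := fun X => if X ∈ O then e.symm X else X
  have sinv_s : ∀ X : C, sinv (s X) = X := by
    intro X
    by_cases h : X ∈ O
    · have h2 : e X ∈ O := (hOe X).mp h
      simp [s, sinv, h, h2]
    · simp [s, sinv, h]
  have s_sinv : ∀ X : C, s (sinv X) = X := by
    intro X
    by_cases h : X ∈ O
    · have h2 : e.symm X ∈ O := (hOesymm X).mp h
      simp [s, sinv, h, h2]
    · simp [s, sinv, h]
  -- isomorphisms X ≅ s X
  have hfe : ∀ X : C, Nonempty (X ≅ s X) := by
    intro X
    by_cases h : X ∈ O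
    · obtain ⟨i⟩ := key h.choose X h.choose_spec
      exact ⟨i.symm ≪≫ eqToIso (by simp [s, h, he])⟩
    · exact ⟨eqToIso (by simp [s, h])⟩
  let f : ∀ X : C, X ≅ s X := fun X => (hfe X).some
  have hfcongr : ∀ {X Y : C} (h : X = Y),
      f X = eqToIso h ≪≫ f Y ≪≫ eqToIso (congrArg s h).symm := by
    rintro X Y rfl
    ext
    simp
  let g : ∀ X : C, X ≅ sinv X := fun X => (f (sinv X) ≪≫ eqToIso (s_sinv X)).symm
  let Ψ : C ⥤ C := conjF s f
  let Ψinv : C ⥤ C := conjF sinv g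
  have hΨ2 : Ψinv ⋙ Ψ = 𝟭 C := by
    rw [show Ψinv ⋙ Ψ = conjF (fun X => s (sinv X)) (fun X => g X ≪≫ f (sinv X)) from
      conjF_comp sinv s g f]
    refine conjF_eq_id _ s_sinv _ ?_
    intro X
    simp [g]
  have hΨ1 : Ψ ⋙ Ψinv = 𝟭 C := by
    rw [show Ψ ⋙ Ψinv = conjF (fun X => sinv (s X)) (fun X => f X ≪≫ g (s X)) from
      conjF_comp s sinv f g]
    refine conjF_eq_id _ sinv_s _ ?_
    intro X
    have h : sinv (s X) = X := sinv_s X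
    simp only [Iso.trans_hom, g, Iso.symm_hom, Iso.trans_inv, eqToIso.inv]
    rw [hfcongr h]
    simp
  let Γ : C ⥤ C := Φ ⋙ Ψinv
  let Γinv : C ⥤ C := Ψ ⋙ Φinv
  refine ⟨Γ, Γinv, Ψ, Ψinv, ?_, ?_, hΨ1, hΨ2, ?_, ?_, ?_⟩
  · show (Φ ⋙ Ψinv) ⋙ (Ψ ⋙ Φinv) = 𝟭 C
    rw [Functor.assoc, ← Functor.assoc Ψinv Ψ Φinv, hΨ2, Functor.id_comp, hΦ1]
  · show (Ψ ⋙ Φinv) ⋙ (Φ ⋙ Ψinv) = 𝟭 C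
    rw [Functor.assoc, ← Functor.assoc Φinv Φ Ψinv, hΦ2, Functor.id_comp, hΨ1]
  · exact ⟨NatIso.ofComponents (fun X => f X) (by intro X Y μ; simp [Ψ, conjF])⟩
  · intro A hA
    have hAO : A ∈ O := ⟨0, by simpa using hA⟩
    have hΦAO : e A ∈ O := (hOe A).mp hAO
    show sinv (Φ.obj A) = A
    rw [← he]
    simp [sinv, hΦAO]
  · show (Φ ⋙ Ψinv) ⋙ Ψ = Φ
    rw [Functor.assoc, hΨ2, Functor.comp_id]
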